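/- For every integer d ≥ 4 and every real γ with 0 < γ < d/3, PR(d,γ) < 1; that is, for dimension at least 4, interpolated-NN strictly improves over k-NN for every admissible interpolation level γ ∈ (0, d/3). -/

import Mathlib

set_option maxHeartbeats 1000000


open Real

/-- The performance ratio of interpolated-NN (interpolation level `γ`) to standard k-NN
in dimension `d`. -/
noncomputable def PR (d γ : ℝ) : ℝ :=
  (1 + γ ^ 2 / (d * (d - 2 * γ))) ^ ((4 : ℝ) / (d + 4)) *
    ((d - γ) ^ 2 / (d + 2 - γ) ^ 2 * (d + 2) ^ 2 / d ^ 2) ^ (d / (d + 4))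

/-- Cubic Bernoulli-type lower bound on `(1+x)^n` for `x ≥ 0`, `n ≥ 3`. -/
lemma binom_cube (x : ℝ) (hx : 0 ≤ x) : ∀ n : ℕ, 3 ≤ n →
    6 + 6*(n:ℝ)*x + 3*(n:ℝ)*((n:ℝ)-1)*x^2 + (n:ℝ)*((n:ℝ)-1)*((n:ℝ)-2)*x^3
      ≤ 6*(1+x)^n := by
  intro n hn
  induction n, hn using Nat.le_induction with
  | base =>
    push_cast
    nlinarith [pow_nonneg hx 3, sq_nonneg x]
  | succ n hn ih =>
    have hn3 : (3:ℝ) ≤ (n:ℝ) := by exact_mod_cast hn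
    have h1 : (0:ℝ) ≤ 1 + x := by linarith
    have h2 := mul_le_mul_of_nonneg_right ih h1
    have key : 0 ≤ (n:ℝ)*((n:ℝ)-1)*((n:ℝ)-2)*x^4 :=
      mul_nonneg (mul_nonneg (mul_nonneg (by linarith) (by linarith)) (by linarith))
        (by positivity)
    push_cast
    rw [pow_succ (1+x) n]
    linarith [h2, key]

/-- For every integer `d ≥ 4` and every real `γ` with `0 < γ < d/3`,
`PR d γ < 1`: in dimension at least 4, interpolated-NN strictly improves over k-NN for
every admissible interpolation level. -/
theorem PR_lt_one_of_dim_ge_four (d : ℕ) (hd : 4 ≤ d) (γ : ℝ)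
    (hγ0 : 0 < γ) (hγ : γ < (d : ℝ) / 3) : PR d γ < 1 := by
  unfold PR
  set D : ℝ := (d:ℝ) with hDdef
  have hD4 : (4:ℝ) ≤ D := by rw [hDdef]; exact_mod_cast hd
  have hD0 : (0:ℝ) < D := by linarith
  have hDγ : 0 < D - γ := by linarith
  have hD2γ : 0 < D - 2*γ := by linarith
  have hD2 : (0:ℝ) < D + 2 := by linarith
  have hD2γ' : 0 < D + 2 - γ := by linarith
  set A : ℝ := 1 + γ ^ 2 / (D * (D - 2 * γ)) with hAdef
  set B : ℝ := (D - γ) ^ 2 / (D + 2 - γ) ^ 2 * (D + 2) ^ 2 / D ^ 2 with hBdef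
  have hu0 : 0 < γ ^ 2 / (D * (D - 2 * γ)) :=
    div_pos (pow_pos hγ0 2) (mul_pos hD0 hD2γ)
  have hA0 : 0 < A := by rw [hAdef]; linarith
  have hB0 : 0 < B := by
    rw [hBdef]
    exact div_pos (mul_pos (div_pos (pow_pos hDγ 2) (pow_pos hD2γ' 2)) (pow_pos hD2 2))
      (pow_pos hD0 2)
  -- the auxiliary quantity `x` with `B * (1+x)^2 = 1`
  set x : ℝ := 2*γ/((D-γ)*(D+2)) with hxdef
  have hx0 : 0 < x := div_pos (by linarith) (mul_pos hDγ hD2)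
  have hBx : B * (1+x)^2 = 1 := by
    rw [hBdef, hxdef]
    field_simp
    ring
  have hBd : B ^ d = ((1+x)^(2*d))⁻¹ := by
    rw [eq_inv_of_mul_eq_one_left hBx, inv_pow, ← pow_mul]
  -- binomial lower bound for (1+x)^(2d)
  have hb := binom_cube x hx0.le (2*d) (by omega)
  have hcast : ((2*d : ℕ):ℝ) = 2*D := by push_cast; ring
  rw [hcast] at hb
  -- normalized variables
  set t : ℝ := γ / D with htdef
  have ht0 : 0 < t := div_pos hγ0 hD0
  have ht3 : t < 1/3 := by
    rw [htdef, div_lt_iff₀ hD0]; linarith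
  have ht1 : 0 < 1 - t := by linarith
  have h2t : 0 < 1 - 2*t := by linarith
  set c0 : ℝ := 4*γ/(3*(D-γ)) with hc0def
  have hc00 : 0 < c0 := div_pos (by linarith) (by linarith)
  have hAt : A = (1-t)^2/(1-2*t) := by
    rw [hAdef, eq_div_iff h2t.ne', htdef]
    rw [one_add_div (mul_pos hD0 hD2γ).ne', ← mul_div_assoc, one_sub_div hD0.ne', one_sub_div hD0.ne',
      div_pow, div_mul_div_comm, div_eq_div_iff (by positivity) (by positivity)]
    ring
  have hct : c0 = 4*t/(3*(1-t)) := by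
    rw [hc0def, div_eq_div_iff (show (3*(D-γ)) ≠ 0 from (by linarith : (0:ℝ) < 3*(D-γ)).ne')
      (show (3*(1-t)) ≠ 0 from (by linarith : (0:ℝ) < 3*(1-t)).ne'), htdef]
    field_simp [hD0.ne']
    try ring
  -- the core one-variable polynomial inequality
  have hw : (0:ℝ) ≤ 1/3 - t := by linarith
  have H : ∀ k : ℕ, 0 ≤ t*(1/3-t)^k := fun k => mul_nonneg ht0.le (pow_nonneg hw k)
  have hN : 0 < (1-2*t)^4 * (27*(1-t)^3 + 72*t*(1-t)^2 + 84*t^2*(1-t) + 56*t^3)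
      - 27*(1-t)^11 := by
    have cert : (1-2*t)^4 * (27*(1-t)^3 + 72*t*(1-t)^2 + 84*t^2*(1-t) + 56*t^3)
        - 27*(1-t)^11
        = 136/2187*t + 6056/729*(t*(1/3-t)) + 350/3*(t*(1/3-t)^2)
          + 17257/27*(t*(1/3-t)^3) + 14353/9*(t*(1/3-t)^4) + 2067*(t*(1/3-t)^5)
          + 2553*(t*(1/3-t)^6) + 1563*(t*(1/3-t)^7) + 729*(t*(1/3-t)^8)
          + 207*(t*(1/3-t)^9) + 27*(t*(1/3-t)^10) := by ring
    rw [cert]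
    have h0 : 0 < 136/2187*t := by linarith
    linarith [H 1, H 2, H 3, H 4, H 5, H 6, H 7, H 8, H 9, H 10]
  -- step 1 : the t-inequality
  have step1 : 6*A^4 < 6 + 12*c0 + 21/2*c0^2 + 21/4*c0^3 := by
    rw [hAt, hct, ← sub_pos]
    have heq : 6 + 12*(4*t/(3*(1-t))) + 21/2*(4*t/(3*(1-t)))^2 + 21/4*(4*t/(3*(1-t)))^3
        - 6*((1-t)^2/(1-2*t))^4
        = 6*((1-2*t)^4 * (27*(1-t)^3 + 72*t*(1-t)^2 + 84*t^2*(1-t) + 56*t^3)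
            - 27*(1-t)^11) / (27*(1-t)^3*(1-2*t)^4) := by
      have hu := ht1.ne'
      have hs := h2t.ne'
      generalize 1 - t = u at hu ⊢
      generalize 1 - 2*t = s at hs ⊢
      field_simp
      ring
    rw [heq]
    exact div_pos (by linarith)
      (mul_pos (mul_pos (by norm_num) (pow_pos ht1 3)) (pow_pos h2t 4))
  -- step 2 : monotonicity in c
  have hDx0 : 0 < D*x := mul_pos hD0 hx0
  have hc : c0 ≤ D*x := by
    have hDx : D*x = 2*γ*D/((D-γ)*(D+2)) := by rw [hxdef]; ring
    rw [hDx, hc0def, div_le_div_iff₀ (by linarith) (mul_pos hDγ hD2)]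
    linarith [mul_nonneg (mul_nonneg hγ0.le hDγ.le) (sub_nonneg.mpr hD4)]
  have mono : 6 + 12*c0 + 21/2*c0^2 + 21/4*c0^3
      ≤ 6 + 12*(D*x) + 21/2*(D*x)^2 + 21/4*(D*x)^3 := by
    have p2 : c0^2 ≤ (D*x)^2 := pow_le_pow_left₀ hc00.le hc 2
    have p3 : c0^3 ≤ (D*x)^3 := pow_le_pow_left₀ hc00.le hc 3
    linarith
  -- step 3 : coefficient comparison with the binomial bound
  have coef : 6 + 12*(D*x) + 21/2*(D*x)^2 + 21/4*(D*x)^3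
      ≤ 6 + 6*(2*D)*x + 3*(2*D)*(2*D-1)*x^2 + (2*D)*(2*D-1)*(2*D-2)*x^3 := by
    have hx2 : (0:ℝ) ≤ x^2 := sq_nonneg x
    have hx3 : (0:ℝ) ≤ x^3 := by positivity
    linarith [mul_nonneg (mul_nonneg hD0.le (sub_nonneg.mpr hD4)) hx2,
      mul_nonneg (mul_nonneg hD0.le (sq_nonneg (D-4))) hx3,
      mul_nonneg (mul_nonneg hD0.le (sub_nonneg.mpr hD4)) hx3]
  have hfin : A^4 < (1+x)^(2*d) := by
    have h6 : (6:ℝ)*A^4 < 6*(1+x)^(2*d) := by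
      calc 6*A^4 < 6 + 12*c0 + 21/2*c0^2 + 21/4*c0^3 := step1
        _ ≤ 6 + 12*(D*x) + 21/2*(D*x)^2 + 21/4*(D*x)^3 := mono
        _ ≤ 6 + 6*(2*D)*x + 3*(2*D)*(2*D-1)*x^2 + (2*D)*(2*D-1)*(2*D-2)*x^3 := coef
        _ ≤ 6*(1+x)^(2*d) := hb
    linarith [h6]
  -- the key natural-power inequality
  have key : A^4 * B^d < 1 := by
    have hp : 0 < (1+x)^(2*d) := pow_pos (by linarith) _
    rw [hBd, inv_eq_one_div, mul_one_div, div_lt_one hp]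
    exact hfin
  -- conclude via rpow algebra
  have hD4pos : (0:ℝ) < D + 4 := by linarith
  have e4 : (4:ℝ)/(D+4) = (4:ℝ)*(1/(D+4)) := by ring
  have eD : D/(D+4) = D*(1/(D+4)) := by ring
  rw [e4, eD, Real.rpow_mul hA0.le, Real.rpow_mul hB0.le,
    show ((4:ℝ)) = ((4:ℕ):ℝ) by norm_num, Real.rpow_natCast, hDdef, Real.rpow_natCast,
    ← Real.mul_rpow (by positivity) (pow_nonneg hB0.le d)]
  exact Real.rpow_lt_one (mul_nonneg (by positivity) (pow_nonneg hB0.le d)) key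
    (one_div_pos.mpr hD4pos)
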